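/- Integrality of Bareiss elimination: let A be an n×n matrix with integer entries, regarded as a matrix over ℚ, whose leading principal minors p_1(A),…,p_{n−1}(A) are all nonzero. Define the tableaux α^{(k)} over ℚ by α^{(1)}_{i,j} = A_{i,j} and α^{(k+1)}_{i,j} = (α^{(k)}_{k,k} · α^{(k)}_{i,j} − α^{(k)}_{i,k} · α^{(k)}_{k,j}) / α^{(k−1)}_{k−1,k−1} for i, j > k (divisor 1 when k = 1). Then every entry α^{(k)}_{i,j} (1 ≤ k ≤ n, i, j ≥ k) is an integer, i.e. lies in the image of ℤ in ℚ. -/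

import Mathlib

/-- The leading principal minor of order `k` of an `n × n` matrix `A`. -/
def pminor {R : Type*} [CommRing R] {n : ℕ} (A : Matrix (Fin n) (Fin n) R)
    (k : ℕ) (h : k ≤ n) : R :=
  (A.submatrix (Fin.castLE h) (Fin.castLE h)).det

open Matrix

def bmat {R : Type*} [CommRing R] {n : ℕ} (A : Matrix (Fin n) (Fin n) R)
    (m : ℕ) (i j : Fin n) : Matrix (Fin (m + 1)) (Fin (m + 1)) R :=
  Matrix.of fun a b =>
    A (if h : (a : ℕ) < m ∧ m < n then ⟨a, h.1.trans h.2⟩ else i)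
      (if h : (b : ℕ) < m ∧ m < n then ⟨b, h.1.trans h.2⟩ else j)

lemma bmat_leading {n : ℕ} (A : Matrix (Fin n) (Fin n) ℚ) (q : ℕ) (hq : q + 1 ≤ n) :
    bmat A q ⟨q, hq⟩ ⟨q, hq⟩ = A.submatrix (Fin.castLE hq) (Fin.castLE hq) := by
  ext a b
  simp only [bmat, Matrix.of_apply, Matrix.submatrix_apply]
  congr 1 <;>
  · split_ifs with h
    · rfl
    · exact Fin.ext (by simp only [Fin.coe_castLE]; omega)

lemma dj {m : ℕ} (E : Matrix (Fin m) (Fin m) ℚ)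
    (Bl : Matrix (Fin m) (Fin 2) ℚ) (Cl : Matrix (Fin 2) (Fin m) ℚ)
    (Dd : Matrix (Fin 2) (Fin 2) ℚ) (hE : E.det ≠ 0) :
    (Matrix.fromBlocks E Bl Cl Dd).det * E.det =
      (Matrix.fromBlocks E (Bl.submatrix id (fun _ : Fin 1 => 0))
        (Cl.submatrix (fun _ : Fin 1 => 0) id) (fun _ _ => Dd 0 0)).det *
      (Matrix.fromBlocks E (Bl.submatrix id (fun _ : Fin 1 => 1))
        (Cl.submatrix (fun _ : Fin 1 => 1) id) (fun _ _ => Dd 1 1)).det -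
      (Matrix.fromBlocks E (Bl.submatrix id (fun _ : Fin 1 => 1))
        (Cl.submatrix (fun _ : Fin 1 => 0) id) (fun _ _ => Dd 0 1)).det *
      (Matrix.fromBlocks E (Bl.submatrix id (fun _ : Fin 1 => 0))
        (Cl.submatrix (fun _ : Fin 1 => 1) id) (fun _ _ => Dd 1 0)).det := by
  have : Invertible E := E.invertibleOfIsUnitDet (isUnit_iff_ne_zero.2 hE)
  have key : ∀ r s : Fin 2,
      (Matrix.fromBlocks E (Bl.submatrix id (fun _ : Fin 1 => s))
        (Cl.submatrix (fun _ : Fin 1 => r) id) (fun _ _ => Dd r s)).det =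
      E.det * (Dd - Cl * ⅟E * Bl) r s := by
    intro r s
    refine (Matrix.det_fromBlocks₁₁ _ _ _ _).trans ?_
    congr 1
    rw [Matrix.det_fin_one]
    simp [Matrix.mul_apply, Matrix.sub_apply]
    rfl
  rw [Matrix.det_fromBlocks₁₁, key, key, key, key, Matrix.det_fin_two]
  ring

lemma key_lemma {n : ℕ}
    (A : Matrix (Fin n) (Fin n) ℚ)
    (hp : ∀ k (_ : 1 ≤ k) (_ : k ≤ n - 1), pminor A k (by have := 0; omega) ≠ 0)
    (α : ℕ → Fin n → Fin n → ℚ)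
    (hinit : ∀ i j, α 1 i j = A i j)
    (hrec : ∀ k (hk1 : 1 ≤ k) (hk : k ≤ n - 1), ∀ i j : Fin n,
      k ≤ (i : ℕ) → k ≤ (j : ℕ) →
      α (k + 1) i j =
        (α k ⟨k - 1, by have := 0; omega⟩ ⟨k - 1, by have := 0; omega⟩ * α k i j -
            α k i ⟨k - 1, by have := 0; omega⟩ * α k ⟨k - 1, by have := 0; omega⟩ j) /
          (if k = 1 then 1 else α (k - 1) ⟨k - 2, by have := 0; omega⟩ ⟨k - 2, by have := 0; omega⟩)) :
    ∀ m, m < n → ∀ i j : Fin n, m ≤ (i : ℕ) → m ≤ (j : ℕ) →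
      α (m + 1) i j = (bmat A m i j).det := by
  intro m
  induction m using Nat.strong_induction_on with
  | _ m IH =>
  intro hmn i j hi hj
  match m with
  | 0 =>
    rw [hinit]
    rw [show bmat A 0 i j = Matrix.of (fun _ _ : Fin 1 => A i j) by
      ext a b; simp [bmat]]
    simp [Matrix.det_fin_one]
  | (p + 1) =>
    have hpn : p + 1 < n := hmn
    have hple : p ≤ n := by omega
    have hrr0 : (p : ℕ) < n := by omega
    set E : Matrix (Fin p) (Fin p) ℚ :=
      A.submatrix (Fin.castLE hple) (Fin.castLE hple) with hE_def
    set rr : Fin 2 → Fin n := fun r => if (r : ℕ) = 0 then ⟨p, hrr0⟩ else i with hrr_def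
    set cc : Fin 2 → Fin n := fun s => if (s : ℕ) = 0 then ⟨p, hrr0⟩ else j with hcc_def
    set Bl : Matrix (Fin p) (Fin 2) ℚ :=
      Matrix.of (fun a s => A (Fin.castLE hple a) (cc s)) with hBl_def
    set Cl : Matrix (Fin 2) (Fin p) ℚ :=
      Matrix.of (fun r b => A (rr r) (Fin.castLE hple b)) with hCl_def
    set Dd : Matrix (Fin 2) (Fin 2) ℚ :=
      Matrix.of (fun r s => A (rr r) (cc s)) with hDd_def
    have hEdet : E.det ≠ 0 := by
      rcases Nat.eq_zero_or_pos p with hpz | hp1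
      · subst hpz
        rw [show E.det = 1 from Matrix.det_isEmpty]
        norm_num
      · exact hp p hp1 (by omega)
    have hAcong : ∀ x x' y y' : Fin n, (x : ℕ) = (x' : ℕ) → (y : ℕ) = (y' : ℕ) →
        A x y = A x' y' := fun x x' y y' h1 h2 => by rw [Fin.ext h1, Fin.ext h2]
    have hrr0' : rr 0 = ⟨p, hrr0⟩ := by simp [hrr_def]
    have hrr1 : rr 1 = i := by simp [hrr_def]
    have hcc0' : cc 0 = ⟨p, hrr0⟩ := by simp [hcc_def]
    have hcc1 : cc 1 = j := by simp [hcc_def]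
    -- small (p+1)-sized determinants
    have hsmall : ∀ r s : Fin 2, (bmat A p (rr r) (cc s)).det =
        (Matrix.fromBlocks E (Bl.submatrix id (fun _ : Fin 1 => s))
          (Cl.submatrix (fun _ : Fin 1 => r) id) (fun _ _ => Dd r s)).det := by
      intro r s
      rw [← Matrix.det_submatrix_equiv_self (finSumFinEquiv (m := p) (n := 1))
        (bmat A p (rr r) (cc s))]
      congr 1
      ext x y
      rcases x with a | r1 <;> rcases y with b | s1 <;>
        simp only [Matrix.fromBlocks_apply₁₁, Matrix.fromBlocks_apply₁₂,
          Matrix.fromBlocks_apply₂₁, Matrix.fromBlocks_apply₂₂,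
          finSumFinEquiv_apply_left, finSumFinEquiv_apply_right,
          Matrix.submatrix_apply, bmat, Matrix.of_apply,
          Fin.coe_castAdd, Fin.coe_natAdd, id_eq, hE_def, hBl_def, hCl_def, hDd_def]
      · rw [dif_pos ⟨a.isLt, by omega⟩, dif_pos ⟨b.isLt, by omega⟩]
        exact hAcong _ _ _ _ (by simp) (by simp)
      · rw [dif_pos ⟨a.isLt, by omega⟩, dif_neg (by omega)]
        exact hAcong _ _ _ _ (by simp) rfl
      · rw [dif_neg (by omega), dif_pos ⟨b.isLt, by omega⟩]
        exact hAcong _ _ _ _ rfl (by simp)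
      · rw [dif_neg (by omega), dif_neg (by omega)]
        rfl
    -- the big (p+2)-sized determinant
    have hbig : (bmat A (p + 1) i j).det =
        (Matrix.fromBlocks E Bl Cl Dd).det := by
      rw [← Matrix.det_submatrix_equiv_self (finSumFinEquiv (m := p) (n := 2))
        (bmat A (p + 1) i j)]
      congr 1
      ext x y
      rcases x with a | r2 <;> rcases y with b | s2 <;>
        simp only [Matrix.fromBlocks_apply₁₁, Matrix.fromBlocks_apply₁₂,
          Matrix.fromBlocks_apply₂₁, Matrix.fromBlocks_apply₂₂,
          finSumFinEquiv_apply_left, finSumFinEquiv_apply_right,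
          Matrix.submatrix_apply, bmat, Matrix.of_apply,
          Fin.coe_castAdd, Fin.coe_natAdd, id_eq, hE_def, hBl_def, hCl_def, hDd_def]
      · rw [dif_pos ⟨by omega, by omega⟩, dif_pos ⟨by omega, by omega⟩]
        exact hAcong _ _ _ _ (by simp) (by simp)
      · rw [dif_pos ⟨by omega, by omega⟩]
        fin_cases s2 <;> split_ifs with h <;>
          first
            | (exfalso; simp at h <;> omega)
            | (apply hAcong <;> simp [hrr_def, hcc_def])
      · fin_cases r2 <;> split_ifs with h <;>
          first
            | (exfalso; simp at h <;> omega)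
            | (apply hAcong <;> simp [hrr_def, hcc_def])
      · fin_cases r2 <;> fin_cases s2 <;> split_ifs with h1 h2 <;>
          first
            | (exfalso; simp_all <;> omega)
            | (apply hAcong <;> simp [hrr_def, hcc_def])
    -- the induction hypotheses for the four minors
    have e00 := IH p (by omega) (by omega) ⟨p, hrr0⟩ ⟨p, hrr0⟩ (le_refl p) (le_refl p)
    have e11 := IH p (by omega) (by omega) i j (by omega) (by omega)
    have e01 := IH p (by omega) (by omega) ⟨p, hrr0⟩ j (le_refl p) (by omega)
    have e10 := IH p (by omega) (by omega) i ⟨p, hrr0⟩ (by omega) (le_refl p)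
    -- the denominator equals det E
    have hden : (if p + 1 = 1 then (1 : ℚ)
        else α (p + 1 - 1) ⟨p + 1 - 2, by omega⟩ ⟨p + 1 - 2, by omega⟩) = E.det := by
      rcases Nat.eq_zero_or_pos p with hpz | hp1
      · subst hpz
        rw [if_pos rfl]
        exact (Matrix.det_isEmpty (A := E)).symm
      · rw [if_neg (by omega)]
        obtain ⟨q, rfl⟩ : ∃ q, p = q + 1 := ⟨p - 1, by omega⟩
        have h1 := IH q (by omega) (by omega) ⟨q, by omega⟩ ⟨q, by omega⟩
          (le_refl q) (le_refl q)
        refine h1.trans ?_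
        rw [bmat_leading A q (by omega)]
    -- the Bareiss recursion
    have hr := hrec (p + 1) (by omega) (by omega) i j hi hj
    have hidx : (⟨p + 1 - 1, by omega⟩ : Fin n) = ⟨p, hrr0⟩ := Fin.ext (by simp)
    rw [hidx] at hr
    rw [hr, hden, e00, e11, e01, e10, hbig]
    have h00 := hsmall 0 0
    have h11 := hsmall 1 1
    have h01 := hsmall 0 1
    have h10 := hsmall 1 0
    rw [hrr0', hcc0'] at h00
    rw [hrr1, hcc1] at h11
    rw [hrr0', hcc1] at h01
    rw [hrr1, hcc0'] at h10
    rw [h00, h11, h01, h10]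
    rw [div_eq_iff hEdet]
    linear_combination (dj E Bl Cl Dd hEdet).symm

/-- Integrality of Bareiss elimination: if `A` is an `n × n` matrix with integer
entries, regarded as a matrix over `ℚ`, whose leading principal minors
`p_1(A), …, p_{n-1}(A)` are nonzero, and the tableaux `α^{(k)}` satisfy the
Bareiss recursion over `ℚ` (1-indexed), then every entry `α^{(k)}_{i,j}` with
`1 ≤ k ≤ n` and `i, j ≥ k` lies in the image of `ℤ` in `ℚ`. -/
theorem stmt5 {n : ℕ} (B : Matrix (Fin n) (Fin n) ℤ)
    (A : Matrix (Fin n) (Fin n) ℚ)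
    (hAB : ∀ i j, A i j = (B i j : ℚ))
    (hp : ∀ k (_ : 1 ≤ k) (_ : k ≤ n - 1), pminor A k (by omega) ≠ 0)
    (α : ℕ → Fin n → Fin n → ℚ)
    (hinit : ∀ i j, α 1 i j = A i j)
    (hrec : ∀ k (hk1 : 1 ≤ k) (hk : k ≤ n - 1), ∀ i j : Fin n,
      k ≤ (i : ℕ) → k ≤ (j : ℕ) →
      α (k + 1) i j =
        (α k ⟨k - 1, by omega⟩ ⟨k - 1, by omega⟩ * α k i j -
            α k i ⟨k - 1, by omega⟩ * α k ⟨k - 1, by omega⟩ j) /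
          (if k = 1 then 1 else α (k - 1) ⟨k - 2, by omega⟩ ⟨k - 2, by omega⟩)) :
    ∀ k (hk1 : 1 ≤ k) (hk : k ≤ n), ∀ i j : Fin n,
      k - 1 ≤ (i : ℕ) → k - 1 ≤ (j : ℕ) →
      α k i j ∈ Set.range ((↑) : ℤ → ℚ) := by
  intro k hk1 hk i j hi hj
  obtain ⟨m, rfl⟩ : ∃ m, k = m + 1 := ⟨k - 1, by omega⟩
  have h := key_lemma A hp α hinit hrec m (by omega) i j (by omega) (by omega)
  have hmap : bmat A m i j = (bmat B m i j).map (Int.castRingHom ℚ) := by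
    ext a b
    simp [bmat, hAB]
  rw [h, hmap]
  exact ⟨(bmat B m i j).det, (Int.castRingHom ℚ).map_det (bmat B m i j)⟩
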